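/- The Moser spindle is unit-distance embeddable: there exists an injective map f : Fin 7 → ℝ² such that dist (f u) (f v) = 1 for every edge {u, v} of the Moser spindle. -/

import Mathlib

/-- The Moser spindle: the graph on `Fin 7` (vertices `1,…,7` relabelled `0,…,6`) with the
11 edges `{1,2}, {1,3}, {1,4}, {1,5}, {2,4}, {3,5}, {2,6}, {4,6}, {3,7}, {5,7}, {6,7}`. -/
def moserSpindle : SimpleGraph (Fin 7) :=
  SimpleGraph.fromEdgeSet
    {s(0, 1), s(0, 2), s(0, 3), s(0, 4), s(1, 3), s(2, 4),
     s(1, 5), s(3, 5), s(2, 6), s(4, 6), s(5, 6)}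

/-- A point of the Euclidean plane with given coordinates. -/
noncomputable def pt (x y : ℝ) : EuclideanSpace ℝ (Fin 2) :=
  (WithLp.equiv 2 (Fin 2 → ℝ)).symm ![x, y]

lemma pt_apply_zero (x y : ℝ) : pt x y 0 = x := rfl
lemma pt_apply_one (x y : ℝ) : pt x y 1 = y := rfl

lemma pt_inj {a b c d : ℝ} : pt a b = pt c d ↔ a = c ∧ b = d := by
  constructor
  · intro h
    exact ⟨congrArg (fun p => p 0) h, congrArg (fun p => p 1) h⟩
  · rintro ⟨rfl, rfl⟩
    rfl

lemma dist_pt (a b c d : ℝ) (h : (a - c) ^ 2 + (b - d) ^ 2 = 1) :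
    dist (pt a b) (pt c d) = 1 := by
  rw [EuclideanSpace.dist_eq, Fin.sum_univ_two, pt_apply_zero, pt_apply_one,
    pt_apply_zero, pt_apply_one, Real.dist_eq, Real.dist_eq, sq_abs, sq_abs, h, Real.sqrt_one]

/-- An explicit unit-distance embedding of the Moser spindle. -/
noncomputable def sp : Fin 7 → EuclideanSpace ℝ (Fin 2) :=
  ![pt 0 0,
    pt (Real.sqrt 11 / 4 - Real.sqrt 3 / 12) (1 / 4 + Real.sqrt 3 * Real.sqrt 11 / 12),
    pt (Real.sqrt 11 / 4 - Real.sqrt 3 / 12) (-(1 / 4) - Real.sqrt 3 * Real.sqrt 11 / 12),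
    pt (Real.sqrt 11 / 4 + Real.sqrt 3 / 12) (1 / 4 - Real.sqrt 3 * Real.sqrt 11 / 12),
    pt (Real.sqrt 11 / 4 + Real.sqrt 3 / 12) (-(1 / 4) + Real.sqrt 3 * Real.sqrt 11 / 12),
    pt (Real.sqrt 11 / 2) (1 / 2),
    pt (Real.sqrt 11 / 2) (-(1 / 2))]


lemma sp_0 : sp 0 = pt 0 0 := rfl
lemma sp_1 : sp 1 = pt (Real.sqrt 11 / 4 - Real.sqrt 3 / 12) (1 / 4 + Real.sqrt 3 * Real.sqrt 11 / 12) := rfl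
lemma sp_2 : sp 2 = pt (Real.sqrt 11 / 4 - Real.sqrt 3 / 12) (-(1 / 4) - Real.sqrt 3 * Real.sqrt 11 / 12) := rfl
lemma sp_3 : sp 3 = pt (Real.sqrt 11 / 4 + Real.sqrt 3 / 12) (1 / 4 - Real.sqrt 3 * Real.sqrt 11 / 12) := rfl
lemma sp_4 : sp 4 = pt (Real.sqrt 11 / 4 + Real.sqrt 3 / 12) (-(1 / 4) + Real.sqrt 3 * Real.sqrt 11 / 12) := rfl
lemma sp_5 : sp 5 = pt (Real.sqrt 11 / 2) (1 / 2) := rfl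
lemma sp_6 : sp 6 = pt (Real.sqrt 11 / 2) (-(1 / 2)) := rfl

set_option maxHeartbeats 1000000 in
/-- The Moser spindle is unit-distance embeddable. -/
theorem moserSpindle_unit_distance_embeddable :
    ∃ f : Fin 7 → EuclideanSpace ℝ (Fin 2),
      Function.Injective f ∧
        ∀ u v : Fin 7, moserSpindle.Adj u v → dist (f u) (f v) = 1 := by
  have h3 : Real.sqrt 3 ^ 2 = 3 := Real.sq_sqrt (by norm_num)
  have h11 : Real.sqrt 11 ^ 2 = 11 := Real.sq_sqrt (by norm_num)
  have h33 : (Real.sqrt 3 * Real.sqrt 11) ^ 2 = 33 := by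
    rw [mul_pow, h3, h11]; norm_num
  have p3 : 0 < Real.sqrt 3 := Real.sqrt_pos.mpr (by norm_num)
  have p11 : 0 < Real.sqrt 11 := Real.sqrt_pos.mpr (by norm_num)
  refine ⟨sp, ?_, ?_⟩
  · intro u v h
    by_cases huv : u = v
    · exact huv
    · exfalso
      fin_cases u <;> fin_cases v <;>
        first
          | exact huv rfl
          | (simp [sp_0, sp_1, sp_2, sp_3, sp_4, sp_5, sp_6, pt_inj] at h
             all_goals
               try obtain ⟨hx, hy⟩ := h
               nlinarith [h3, h11, h33, p3, p11, mul_pos p3 p11])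
  · intro u v h
    rw [moserSpindle] at h
    simp only [SimpleGraph.fromEdgeSet_adj, Set.mem_insert_iff, Set.mem_singleton_iff,
      Sym2.eq, Sym2.rel_iff', Prod.mk.injEq, Prod.swap_prod_mk, ne_eq] at h
    obtain ⟨hm, -⟩ := h
    rcases hm with (⟨rfl, rfl⟩ | ⟨rfl, rfl⟩) | (⟨rfl, rfl⟩ | ⟨rfl, rfl⟩) |
      (⟨rfl, rfl⟩ | ⟨rfl, rfl⟩) | (⟨rfl, rfl⟩ | ⟨rfl, rfl⟩) | (⟨rfl, rfl⟩ | ⟨rfl, rfl⟩) |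
      (⟨rfl, rfl⟩ | ⟨rfl, rfl⟩) | (⟨rfl, rfl⟩ | ⟨rfl, rfl⟩) | (⟨rfl, rfl⟩ | ⟨rfl, rfl⟩) |
      (⟨rfl, rfl⟩ | ⟨rfl, rfl⟩) | (⟨rfl, rfl⟩ | ⟨rfl, rfl⟩) | ⟨rfl, rfl⟩ | ⟨rfl, rfl⟩ <;>
      exact dist_pt _ _ _ _ (by nlinarith [h3, h11, h33])
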